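/- Let X be a regular Hausdorff space of countable spread. If X is not hereditarily Lindelöf, then X contains a subspace that is hereditarily separable and not Lindelöf (an S-space). -/

import Mathlib

open TopologicalSpace

/-- A space has *countable spread* if every subspace that is discrete in its
subspace topology is countable. -/
def CountableSpread (X : Type*) [TopologicalSpace X] : Prop :=
  ∀ D : Set X, DiscreteTopology ↥D → D.Countable

section Aux

universe u

/-- Transfinite recursion of length a well-order with countable initial segments:
at each step we may choose a point depending on the countable set of previous values. -/
theorem omega1_rec_aux {W : Type*} [LinearOrder W] [WellFoundedLT W]
    (hIio : ∀ a : W, (Set.Iio a).Countable)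
    {X : Type*} (P : Set X → X → Prop)
    (h : ∀ s : Set X, s.Countable → ∃ x, P s x) :
    ∃ f : W → X, ∀ a, P (f '' Set.Iio a) (f a) := by
  have wf : WellFounded ((· < ·) : W → W → Prop) := wellFounded_lt
  have cnt : ∀ (a : W) (g : Set.Iio a → X), (Set.range g).Countable := by
    intro a g
    have := (hIio a).to_subtype
    exact Set.countable_range g
  let F : ∀ a : W, (∀ b, b < a → X) → X := fun a ih =>
    (h (Set.range fun b : Set.Iio a => ih b.1 b.2) (cnt a _)).choose
  refine ⟨wf.fix F, fun a => ?_⟩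
  have hfix : wf.fix F a = F a fun b _ => wf.fix F b := wf.fix_eq F a
  have himg : wf.fix F '' Set.Iio a = Set.range fun b : Set.Iio a => wf.fix F b.1 :=
    Set.image_eq_range _ _
  rw [hfix, himg]
  exact (h _ (cnt a _)).choose_spec

/-- In an uncountable type, every countable set omits a point. -/
theorem exists_not_mem_aux {W : Type*} (hW : ¬ Countable W)
    {s : Set W} (hs : s.Countable) : ∃ a, a ∉ s := by
  by_contra hcon
  push_neg at hcon
  apply hW
  rw [← Set.countable_univ_iff]
  exact hs.mono fun x _ => hcon x

/-- In an uncountable linear order with countable initial segments, every countable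
set has a strict upper bound. -/
theorem exists_above_aux {W : Type*} [LinearOrder W]
    (hW : ¬ Countable W) (hIio : ∀ a : W, (Set.Iio a).Countable)
    {s : Set W} (hs : s.Countable) :
    ∃ a, ∀ b ∈ s, b < a := by
  have ht : (⋃ b ∈ s, Set.Iic b).Countable :=
    hs.biUnion fun b _ => by rw [← Set.Iio_insert]; exact (hIio b).insert b
  obtain ⟨a, ha⟩ := exists_not_mem_aux hW ht
  refine ⟨a, fun b hb => ?_⟩
  by_contra hab
  exact ha (Set.mem_biUnion hb (le_of_not_gt hab))

/-- A non-Lindelöf set admits an open cover (given as a family of open sets)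
with no countable subcover. -/
theorem exists_cover_aux {X : Type u} [TopologicalSpace X] {A : Set X}
    (hA : ¬ IsLindelof A) :
    ∃ 𝒰 : Set (Set X), (∀ v ∈ 𝒰, IsOpen v) ∧ A ⊆ ⋃₀ 𝒰 ∧
      ∀ 𝒱 ⊆ 𝒰, 𝒱.Countable → ¬ A ⊆ ⋃₀ 𝒱 := by
  by_contra hcon
  push_neg at hcon
  apply hA
  apply isLindelof_of_countable_subcover
  intro ι U hUo hAU
  obtain ⟨𝒱, h𝒱sub, h𝒱cnt, h𝒱cov⟩ :=
    hcon (Set.range U) (by rintro v ⟨i, rfl⟩; exact hUo i)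
      (by rwa [Set.sUnion_range])
  have hch : ∀ v : 𝒱, ∃ i, U i = (v : Set X) := fun v => h𝒱sub v.2
  choose φ hφ using hch
  have := h𝒱cnt.to_subtype
  refine ⟨Set.range φ, Set.countable_range φ, fun x hx => ?_⟩
  obtain ⟨v, hv, hxv⟩ := h𝒱cov hx
  exact Set.mem_biUnion ⟨⟨v, hv⟩, rfl⟩ (by rw [hφ ⟨v, hv⟩]; exact hxv)

theorem main_aux {X : Type u} [TopologicalSpace X]
    (hs : CountableSpread X)
    (hnl : ¬ HereditarilyLindelofSpace X) :
    ∃ S : Set X, (∀ T : Set ↥S, SeparableSpace ↥T) ∧ ¬ LindelofSpace ↥S := by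
  classical
  -- the index well-order: a well-order of type ω₁
  set W : Type u := (Cardinal.aleph 1).ord.ToType with hWdef
  have hIio : ∀ a : W, (Set.Iio a).Countable := fun a =>
    (Cardinal.countable_iff_lt_aleph_one _).mpr (Cardinal.mk_Iio_ord_toType a)
  have hWnc : ¬ Countable W := by
    rw [← Cardinal.mk_le_aleph0_iff, Cardinal.mk_toType, Cardinal.card_ord]
    exact Cardinal.aleph0_lt_aleph_one.not_ge
  -- a non-Lindelöf subset and a cover of it with no countable subcover
  have hexA : ∃ A : Set X, ¬ IsLindelof A := by
    by_contra h
    push_neg at h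
    exact hnl ⟨fun t _ => h t⟩
  obtain ⟨A, hA⟩ := hexA
  obtain ⟨𝒰, h𝒰o, h𝒰cov, h𝒰nc⟩ := exists_cover_aux hA
  -- first recursion: a right-separated ω₁-sequence in A
  have h₁ : ∀ s : Set (X × Set X), s.Countable →
      ∃ p : X × Set X, p.1 ∈ A ∧ p.2 ∈ 𝒰 ∧ p.1 ∈ p.2 ∧
        ∀ q ∈ s, q.2 ∈ 𝒰 → p.1 ∉ q.2 := by
    intro s hscnt
    have h𝒱 : ¬ A ⊆ ⋃₀ ((Prod.snd '' s) ∩ 𝒰) :=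
      h𝒰nc _ Set.inter_subset_right ((hscnt.image _).mono Set.inter_subset_left)
    obtain ⟨x, hxA, hx𝒱⟩ := Set.not_subset.1 h𝒱
    obtain ⟨v, hv𝒰, hxv⟩ := h𝒰cov hxA
    refine ⟨(x, v), hxA, hv𝒰, hxv, fun q hq hq𝒰 hxq => ?_⟩
    exact hx𝒱 ⟨q.2, ⟨⟨q, hq, rfl⟩, hq𝒰⟩, hxq⟩
  obtain ⟨f, hf⟩ := omega1_rec_aux hIio _ h₁
  set g : W → X := fun a => (f a).1 with hgdef
  set V : W → Set X := fun a => (f a).2 with hVdef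
  have hV𝒰 : ∀ a, V a ∈ 𝒰 := fun a => (hf a).2.1
  have hgV : ∀ a, g a ∈ V a := fun a => (hf a).2.2.1
  have hVo : ∀ a, IsOpen (V a) := fun a => h𝒰o _ (hV𝒰 a)
  have hsep : ∀ a b : W, b < a → g a ∉ V b := fun a b hba =>
    (hf a).2.2.2 (f b) ⟨b, hba, rfl⟩ (hV𝒰 b)
  set S : Set X := Set.range g with hSdef
  -- right separation property
  have hRS : ∀ a b : W, g b ∈ V a → b ≤ a := fun a b hb =>
    le_of_not_gt fun h => hsep b a h hb
  refine ⟨S, ?_, ?_⟩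
  · -- hereditary separability of S
    intro T
    by_contra hTsep
    set j : ↥T → X := fun t => ((t : ↥S) : X) with hjdef
    have hjinj : Function.Injective j := fun a b h =>
      Subtype.ext (Subtype.ext h)
    set T₀ : Set X := Set.range j with hT₀def
    have hT₀S : T₀ ⊆ S := by rintro x ⟨t, rfl⟩; exact (t : ↥S).2
    -- since T is not separable, no countable set is dense in T₀
    have hstep : ∀ c : Set X, c.Countable → ∃ y, y ∈ T₀ ∧ y ∉ closure (c ∩ T₀) := by
      intro c hc
      by_contra hcon
      push_neg at hcon
      apply hTsep
      set d : Set X := c ∩ T₀ with hddef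
      have hdT₀ : d ⊆ T₀ := Set.inter_subset_right
      refine ⟨⟨j ⁻¹' d, (hc.mono Set.inter_subset_left).preimage hjinj, fun t => ?_⟩⟩
      rw [closure_subtype, closure_subtype, Set.image_image]
      have himg : (fun x : ↥T => ((x : ↥S) : X)) '' (j ⁻¹' d) = d := by
        rw [show (fun x : ↥T => ((x : ↥S) : X)) = j from rfl,
          Set.image_preimage_eq_range_inter, ← hT₀def,
          Set.inter_eq_self_of_subset_right hdT₀]
      rw [himg]
      exact hcon _ ⟨t, rfl⟩
    -- second recursion: a left-separated ω₁-sequence in T₀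
    obtain ⟨y, hy⟩ := omega1_rec_aux hIio
      (fun s x => x ∈ T₀ ∧ x ∉ closure (s ∩ T₀)) hstep
    have hyT₀ : ∀ a, y a ∈ T₀ := fun a => (hy a).1
    have hL : ∀ a : W, y a ∉ closure (y '' Set.Iio a) := by
      intro a
      have h2 := (hy a).2
      rwa [Set.inter_eq_self_of_subset_left
        (by rintro x ⟨b, -, rfl⟩; exact hyT₀ b)] at h2
    have hyinj : Function.Injective y := by
      intro a b hab
      by_contra hne
      rcases lt_or_gt_of_ne hne with h | h
      · exact hL b (hab ▸ subset_closure (Set.mem_image_of_mem y h))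
      · exact hL a (hab.symm ▸ subset_closure (Set.mem_image_of_mem y h))
    -- each y a belongs to S, hence has a "right" index
    have hrex : ∀ a : W, ∃ w : W, g w = y a := fun a => hT₀S (hyT₀ a)
    choose r hr using hrex
    have hrinj : Function.Injective r := fun a b hab =>
      hyinj (by rw [← hr a, ← hr b, hab])
    -- third recursion: make the two well-orders agree
    have h₃ : ∀ s : Set W, s.Countable → ∃ d : W, ∀ e ∈ s, e < d ∧ r e < r d := by
      intro s hscnt
      have hIic : ∀ b : W, (Set.Iic b).Countable := fun b => by
        rw [← Set.Iio_insert]; exact (hIio b).insert b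
      have hbad : ((⋃ e ∈ s, Set.Iic e) ∪ r ⁻¹' (⋃ e ∈ s, Set.Iic (r e))).Countable :=
        (hscnt.biUnion fun e _ => hIic e).union
          ((hscnt.biUnion fun e _ => hIic (r e)).preimage hrinj)
      obtain ⟨d, hd⟩ := exists_not_mem_aux hWnc hbad
      refine ⟨d, fun e he => ⟨?_, ?_⟩⟩
      · by_contra hde
        exact hd (Or.inl (Set.mem_biUnion he (le_of_not_gt hde)))
      · by_contra hde
        exact hd (Or.inr (Set.mem_biUnion he (le_of_not_gt hde)))
    obtain ⟨D, hD⟩ := omega1_rec_aux hIio _ h₃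
    have hDm : ∀ a b : W, b < a → D b < D a ∧ r (D b) < r (D a) :=
      fun a b h => hD a (D b) ⟨b, h, rfl⟩
    set z : W → X := fun a => y (D a) with hzdef
    have hzinj : Function.Injective z := by
      intro a b hab
      by_contra hne
      rcases lt_or_gt_of_ne hne with h | h
      · exact absurd (hyinj hab.symm) (ne_of_gt (hDm b a h).1)
      · exact absurd (hyinj hab) (ne_of_gt (hDm a b h).1)
    set E : Set X := Set.range z with hEdef
    -- E is an uncountable discrete subspace, contradicting countable spread
    have hdisc : DiscreteTopology ↥E := by
      rw [discreteTopology_iff_isOpen_singleton]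
      intro p
      obtain ⟨a, ha⟩ := p.2
      set O : Set X := (closure (y '' Set.Iio (D a)))ᶜ ∩ V (r (D a)) with hOdef
      have hOopen : IsOpen O := (isClosed_closure.isOpen_compl).inter (hVo _)
      have hzaO : z a ∈ O := ⟨hL (D a), by
        show y (D a) ∈ V (r (D a)); rw [← hr (D a)]; exact hgV _⟩
      have hkey : ∀ b : W, z b ∈ O → b = a := by
        intro b hb
        by_contra hne
        have h1 : r (D b) ≤ r (D a) := by
          apply hRS
          rw [hr (D b)]
          exact hb.2
        rcases lt_or_gt_of_ne hne with h | h
        · exact hb.1 (subset_closure (Set.mem_image_of_mem y (hDm a b h).1))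
        · exact absurd (hDm b a h).2 (not_lt_of_ge h1)
      have hset : ({p} : Set ↥E) = Subtype.val ⁻¹' O := by
        ext q
        constructor
        · rintro rfl
          exact Set.mem_preimage.2 (ha ▸ hzaO)
        · intro hq
          obtain ⟨b, hb⟩ := q.2
          have : b = a := hkey b (hb ▸ hq)
          exact Subtype.ext (by rw [← hb, this, ha])
      rw [hset]
      exact hOopen.preimage continuous_subtype_val
    have hEcnt : E.Countable := hs E hdisc
    have : Countable W := by
      have := hEcnt.to_subtype
      exact Function.Injective.countable
        (f := fun a : W => (⟨z a, a, rfl⟩ : ↥E))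
        (fun a b hab => hzinj (congrArg Subtype.val hab))
    exact hWnc this
  · -- S is not Lindelöf
    intro hLin
    have hSL : IsLindelof S := isLindelof_iff_LindelofSpace.mpr hLin
    obtain ⟨t, htcnt, htcov⟩ := hSL.elim_countable_subcover V hVo
      (fun x ⟨a, ha⟩ => ha ▸ Set.mem_iUnion.2 ⟨a, hgV a⟩)
    obtain ⟨a, hab⟩ := exists_above_aux hWnc hIio htcnt
    obtain ⟨b, hbt, hgb⟩ := Set.mem_iUnion₂.1 (htcov ⟨a, rfl⟩)
    exact hsep a b (hab b hbt) hgb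

end Aux

theorem countable_spread_not_hereditarily_lindelof_gives_Sspace
    {X : Type*} [TopologicalSpace X] [T2Space X] [RegularSpace X]
    (hs : CountableSpread X)
    (hnl : ¬ HereditarilyLindelofSpace X) :
    ∃ S : Set X, (∀ T : Set ↥S, SeparableSpace ↥T) ∧ ¬ LindelofSpace ↥S := by
  exact main_aux hs hnl
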